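/- Let 𝒯 be a finite set of templates and let 𝒩 be a c-bounded 𝒯-GNN with l layers and Boolean classification function. Then there exists a GML(𝒯) formula φ of modal depth l and counting bound c that captures 𝒩: for every finite labelled graph G (over the fixed finite proposition set) and every node v of G, 𝒩(G,v) = 1 if and only if (G,v) ⊨ φ. -/

import Mathlib

set_option maxHeartbeats 1000000

attribute [local instance 10] Classical.propDecidable

/-- A template `T = (V, E⁺, E⁻, r)`: vertex set `Fin (n+1)` (cardinality `n+1`),
root `0`, edges `pos`, non-edges `neg`, with `pos ∩ neg = ∅`. -/
structure Template where
  n : ℕ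
  pos : Finset (Fin (n + 1) × Fin (n + 1))
  neg : Finset (Fin (n + 1) × Fin (n + 1))
  disj : ∀ p, ¬(p ∈ pos ∧ p ∈ neg)

/-- A labelled directed graph with labels in `Λ`: a finite vertex set (a finite
subset of `ℕ`), an edge relation `E ⊆ V × V`, and a labelling of the nodes. -/
structure LGraph (Λ : Type) where
  verts : Finset ℕ
  edge : ℕ → ℕ → Prop
  lab : ℕ → Λ
  edge_mem : ∀ u w, edge u w → u ∈ verts ∧ w ∈ verts

/-- `f` is a template embedding of `T` into the pointed graph `(G, w)`:
an injective map sending the root to `w`, `E⁺`-pairs to edges and `E⁻`-pairs to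
non-edges. -/
def IsEmb {Λ : Type} (T : Template) (G : LGraph Λ) (w : ℕ) (f : Fin (T.n + 1) → ℕ) : Prop :=
  Function.Injective f ∧ f 0 = w ∧ (∀ i, f i ∈ G.verts) ∧
    (∀ p ∈ T.pos, G.edge (f p.1) (f p.2)) ∧ (∀ p ∈ T.neg, ¬ G.edge (f p.1) (f p.2))

/-- The (finite) set `emb(T,(G,w))` of template embeddings of `T` into `(G, w)`. -/
noncomputable def embFinset {Λ : Type} (T : Template) (G : LGraph Λ) (w : ℕ) :
    Finset (Fin (T.n + 1) → ℕ) :=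
  (Fintype.piFinset fun _ : Fin (T.n + 1) => G.verts).filter (IsEmb T G w)

/-- Forth condition: any `k` pairwise distinct template embeddings of `T` at `(G,v)`
can be matched by `k` pairwise distinct embeddings at `(G',v')`, pointwise related
by `Z`. -/
def Forth {Λ : Type} (Z : ℕ → ℕ → Prop) (T : Template) (G G' : LGraph Λ)
    (v v' : ℕ) (k : ℕ) : Prop :=
  ∀ F : Fin k → (Fin (T.n + 1) → ℕ), Function.Injective F → (∀ i, IsEmb T G v (F i)) →
    ∃ F' : Fin k → (Fin (T.n + 1) → ℕ), Function.Injective F' ∧ (∀ i, IsEmb T G' v' (F' i)) ∧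
      ∀ i u, Z (F i u) (F' i u)

/-- `Z` is a graded `l`-`𝒯`-bisimulation between `G` and `G'`, where the allowed
multiplicities `k` in the back-and-forth conditions are those satisfying `P`. -/
def IsBisimP {Λ : Type} (𝒯 : Finset Template) (P : ℕ → Prop) (G G' : LGraph Λ) :
    ℕ → (ℕ → ℕ → Prop) → Prop
  | 0, Z => ∀ v v', Z v v' → G.lab v = G'.lab v'
  | l + 1, Z => ∃ Z', IsBisimP 𝒯 P G G' l Z' ∧
      ∀ v v', Z v v' → Z' v v' ∧ ∀ T ∈ 𝒯, ∀ k, P k →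
        Forth Z' T G G' v v' k ∧ Forth (fun a b => Z' b a) T G' G v' v k

/-- `(G,v)` and `(G',v')` are graded `l`-`𝒯`-bisimilar. -/
def GBisimilar {Λ : Type} (𝒯 : Finset Template) (l : ℕ) (G : LGraph Λ) (v : ℕ)
    (G' : LGraph Λ) (v' : ℕ) : Prop :=
  ∃ Z, IsBisimP 𝒯 (fun k => 1 ≤ k) G G' l Z ∧ Z v v'

/-- `(G,v)` and `(G',v')` are `l`-`c`-`𝒯`-bisimilar (multiplicities restricted to `k ≤ c`). -/
def BBisimilar {Λ : Type} (𝒯 : Finset Template) (l c : ℕ) (G : LGraph Λ) (v : ℕ)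
    (G' : LGraph Λ) (v' : ℕ) : Prop :=
  ∃ Z, IsBisimP 𝒯 (fun k => 1 ≤ k ∧ k ≤ c) G G' l Z ∧ Z v v'

/-- `A↾c`: cap all multiplicities of a multiset at `c`. -/
noncomputable def mcap {α : Type} (c : ℕ) (m : Multiset α) : Multiset α :=
  m.toFinset.val.bind fun a => Multiset.replicate (min c (m.count a)) a

/-- The `𝒯`-WL colouring of `G` after `l` rounds, using `hash0` for the initial
colouring and `hash` for the refinement rounds; at each round the new colour of `v`
hashes its previous colour together with, for each template `T ∈ 𝒯`, the multiset of
`T`-labelled colourings induced by the template embeddings at `v`. -/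
noncomputable def colWL {Λ C : Type} (𝒯 : Finset Template) (hash0 : Λ → C)
    (hash : C → ((T : {x // x ∈ 𝒯}) → Multiset (Fin (T.1.n + 1) → C)) → C)
    (G : LGraph Λ) : ℕ → ℕ → C
  | 0, v => hash0 (G.lab v)
  | l + 1, v =>
      hash (colWL 𝒯 hash0 hash G l v)
        (fun T => (embFinset T.1 G v).val.map
          (fun f => fun u => colWL 𝒯 hash0 hash G l (f u)))

/-- A multiset function is `c`-bounded if its value is unchanged when all
multiplicities larger than `c` are replaced by `c`. -/
def CBoundedFun {α β : Type} (c : ℕ) (g : Multiset α → β) : Prop :=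
  ∀ m, g m = g (mcap c m)

/-- An `nAr`-ary `L`-layer `𝒯`-GNN with feature dimension `d`: templates from `𝒯`,
template-aggregation functions (invariant under root-fixing label-preserving template
automorphisms), outer multiset aggregation functions, combination functions, and a
Boolean classification function. -/
structure TGNN (𝒯 : Finset Template) (d nAr L : ℕ) where
  temp : Fin L → Fin nAr → Template
  temp_mem : ∀ l j, temp l j ∈ 𝒯
  aggT : (l : Fin L) → (j : Fin nAr) → ((Fin ((temp l j).n + 1) → (Fin d → ℝ)) → (Fin d → ℝ))
  aggT_inv : ∀ (l : Fin L) (j : Fin nAr) (σ : Equiv.Perm (Fin ((temp l j).n + 1)))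
      (lab₁ lab₂ : Fin ((temp l j).n + 1) → (Fin d → ℝ)),
      σ 0 = 0 →
      (∀ p : Fin ((temp l j).n + 1) × Fin ((temp l j).n + 1),
        p ∈ (temp l j).pos ↔ (σ p.1, σ p.2) ∈ (temp l j).pos) →
      (∀ p : Fin ((temp l j).n + 1) × Fin ((temp l j).n + 1),
        p ∈ (temp l j).neg ↔ (σ p.1, σ p.2) ∈ (temp l j).neg) →
      (∀ u, u ≠ 0 → lab₁ u = lab₂ (σ u)) →
      aggT l j lab₁ = aggT l j lab₂
  agg : Fin L → Fin nAr → Multiset (Fin d → ℝ) → (Fin d → ℝ)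
  comb : Fin L → (Fin d → ℝ) → (Fin nAr → (Fin d → ℝ)) → (Fin d → ℝ)
  cls : (Fin d → ℝ) → Bool

/-- The feature vector `λ^l(v)` of node `v` after `l` layers of the `𝒯`-GNN `N` on
input graph `G`. -/
noncomputable def TGNN.feat {𝒯 : Finset Template} {d nAr L : ℕ} (N : TGNN 𝒯 d nAr L)
    (G : LGraph (Fin d → ℝ)) : ℕ → ℕ → (Fin d → ℝ)
  | 0, v => G.lab v
  | l + 1, v =>
      if h : l < L then
        N.comb ⟨l, h⟩ (N.feat G l v)
          (fun j => N.agg ⟨l, h⟩ j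
            ((embFinset (N.temp ⟨l, h⟩ j) G v).val.map
              (fun f => N.aggT ⟨l, h⟩ j (fun u => N.feat G l (f u)))))
      else fun _ => 0

/-- A `𝒯`-GNN is `c`-bounded if all its outer aggregation functions are `c`-bounded. -/
def TGNN.IsCBounded {𝒯 : Finset Template} {d nAr L : ℕ} (N : TGNN 𝒯 d nAr L) (c : ℕ) : Prop :=
  ∀ l j, CBoundedFun c (N.agg l j)

def boolToReal (b : Bool) : ℝ := if b then 1 else 0

/-- Identify a `{0,1}^d`-labelled graph with a real-vector labelled graph. -/
def LGraph.toReal {d : ℕ} (G : LGraph (Fin d → Bool)) : LGraph (Fin d → ℝ) :=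
  ⟨G.verts, G.edge, fun v i => boolToReal (G.lab v i), G.edge_mem⟩

/-- Initialize real feature vectors of dimension `d'` from `{0,1}^a`-labels
(the first `a` coordinates hold the truth values of the propositions, the rest are `0`). -/
def initG {a : ℕ} (d' : ℕ) (G : LGraph (Fin a → Bool)) : LGraph (Fin d' → ℝ) :=
  ⟨G.verts, G.edge, fun v i => if h : (i : ℕ) < a then boolToReal (G.lab v ⟨i, h⟩) else 0,
    G.edge_mem⟩

/-- Formulae of graded template modal logic `GML(𝒯)` over propositions `AP`
(`⊤` included; a modality `⟨T⟩^{≥j}(φ₁,…,φ_{n_T})` takes `n_T = |V_T| - 1` arguments). -/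
inductive GML (AP : Type) : Type
  | top : GML AP
  | prop : AP → GML AP
  | neg : GML AP → GML AP
  | and : GML AP → GML AP → GML AP
  | dia : (T : Template) → ℕ → (Fin T.n → GML AP) → GML AP

/-- Semantics of `GML(𝒯)` on pointed labelled graphs:
`(G,v) ⊨ ⟨T⟩^{≥j}(φ⃗)` iff at least `j` embeddings `f ∈ emb(T,(G,v))` satisfy
`(G, f(i)) ⊨ φᵢ` for all `1 ≤ i ≤ n_T`. -/
def Sat {AP : Type} (G : LGraph (AP → Bool)) : GML AP → ℕ → Prop
  | .top, _ => True
  | .prop p, v => G.lab v p = true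
  | .neg φ, v => ¬ Sat G φ v
  | .and φ ψ, v => Sat G φ v ∧ Sat G ψ v
  | .dia T j φs, v =>
      j ≤ ((embFinset T G v).filter
        (fun f => ∀ i : Fin T.n, Sat G (φs i) (f i.succ))).card

/-- Modal depth. -/
def GML.md {AP : Type} : GML AP → ℕ
  | .top => 0
  | .prop _ => 0
  | .neg φ => φ.md
  | .and φ ψ => max φ.md ψ.md
  | .dia _ _ φs => 1 + Finset.univ.sup fun i => (φs i).md

/-- Counting bound: the least `c` such that every modality `⟨T⟩^{≥j}` occurring in the
formula has `j ≤ c`. -/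
def GML.cb {AP : Type} : GML AP → ℕ
  | .top => 0
  | .prop _ => 0
  | .neg φ => φ.cb
  | .and φ ψ => max φ.cb ψ.cb
  | .dia _ j φs => max j (Finset.univ.sup fun i => (φs i).cb)

/-- Syntactic depth: counts both Boolean connectives and modalities along the deepest
branch of the syntax tree. -/
def GML.sd {AP : Type} : GML AP → ℕ
  | .top => 0
  | .prop _ => 0
  | .neg φ => 1 + φ.sd
  | .and φ ψ => 1 + max φ.sd ψ.sd
  | .dia _ _ φs => 1 + Finset.univ.sup fun i => (φs i).sd

/-- Well-formedness of a `GML(𝒯)` formula: all templates come from `𝒯` and all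
grades satisfy `j ≥ 1`. -/
def GML.Wf {AP : Type} (𝒯 : Finset Template) : GML AP → Prop
  | .top => True
  | .prop _ => True
  | .neg φ => φ.Wf 𝒯
  | .and φ ψ => φ.Wf 𝒯 ∧ ψ.Wf 𝒯
  | .dia T j φs => T ∈ 𝒯 ∧ 1 ≤ j ∧ ∀ i, (φs i).Wf 𝒯

/-- Finite conjunction (`⊤` for the empty list). -/
def bigConj {AP : Type} : List (GML AP) → GML AP
  | [] => .top
  | φ :: rest => .and φ (bigConj rest)

/-- `|S^{(G,v)}_{T,φ⃗}|`: the number of embeddings `f ∈ emb(T,(G,v))` with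
`(G, f(i)) ⊨ φᵢ` for all `1 ≤ i ≤ n_T`. -/
noncomputable def Scard {AP : Type} (G : LGraph (AP → Bool)) (T : Template) (v : ℕ)
    (φs : Fin T.n → GML AP) : ℕ :=
  ((embFinset T G v).filter (fun f => ∀ i : Fin T.n, Sat G (φs i) (f i.succ))).card

/-- The `l`-characteristic formula `χ^l_{(G,v)}`. -/
noncomputable def charU {AP : Type} [Fintype AP] (𝒯 : Finset Template) :
    ℕ → LGraph (AP → Bool) → ℕ → GML AP
  | 0 => fun G v =>
      bigConj ((Finset.univ : Finset AP).toList.map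
        (fun p => if G.lab v p then GML.prop p else GML.neg (GML.prop p)))
  | l + 1 => fun G v =>
      GML.and (charU 𝒯 l G v)
        (bigConj (𝒯.toList.map (fun T =>
          GML.and
            (bigConj ((embFinset T G v).toList.map (fun f =>
              GML.dia T (Scard G T v (fun i => charU 𝒯 l G (f i.succ)))
                (fun i => charU 𝒯 l G (f i.succ)))))
            (GML.neg (GML.dia T (Scard G T v (fun _ => GML.top) + 1)
              (fun _ => GML.top))))))

/-- `reps m` is a system of representatives for the `m`-`c`-`𝒯`-bisimilarity classes of
finite pointed labelled graphs: every representative is a genuine pointed graph, every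
pointed graph is `m`-`c`-`𝒯`-bisimilar to some representative, and distinct
representatives are non-bisimilar. -/
def RepSystem {AP : Type} (𝒯 : Finset Template) (c : ℕ)
    (reps : ℕ → Finset (LGraph (AP → Bool) × ℕ)) : Prop :=
  ∀ m : ℕ,
    (∀ q ∈ reps m, q.2 ∈ q.1.verts) ∧
    (∀ (G : LGraph (AP → Bool)) (v : ℕ), v ∈ G.verts →
      ∃ q ∈ reps m, BBisimilar 𝒯 m c q.1 q.2 G v) ∧
    (∀ q ∈ reps m, ∀ q' ∈ reps m, BBisimilar 𝒯 m c q.1 q.2 q'.1 q'.2 → q = q')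

/-- The bounded `l`-`c`-characteristic formula `χ^{l,c}_{(G,v)}`, relative to a chosen
system `reps` of representatives of the bounded bisimilarity classes. -/
noncomputable def charB {AP : Type} [Fintype AP] (𝒯 : Finset Template) (c : ℕ)
    (reps : ℕ → Finset (LGraph (AP → Bool) × ℕ)) :
    ℕ → LGraph (AP → Bool) → ℕ → GML AP
  | 0 => fun G v =>
      bigConj ((Finset.univ : Finset AP).toList.map
        (fun p => if G.lab v p then GML.prop p else GML.neg (GML.prop p)))
  | l + 1 => fun G v =>
      GML.and (charB 𝒯 c reps l G v)
        (bigConj (𝒯.toList.map (fun T =>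
          GML.and
            (bigConj ((embFinset T G v).toList.map (fun f =>
              GML.dia T (min c (Scard G T v (fun i => charB 𝒯 c reps l G (f i.succ))))
                (fun i => charB 𝒯 c reps l G (f i.succ)))))
            (bigConj (((Fintype.piFinset (fun _ : Fin T.n => reps l)).filter
                (fun t => Scard G T v
                  (fun i => charB 𝒯 c reps l (t i).1 (t i).2) + 1 ≤ c)).toList.map
              (fun t => GML.neg (GML.dia T
                  (Scard G T v (fun i => charB 𝒯 c reps l (t i).1 (t i).2) + 1)
                  (fun i => charB 𝒯 c reps l (t i).1 (t i).2))))))))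

/-- Standard graded forth condition on out-neighbours. -/
def StdForth {Λ : Type} (Z : ℕ → ℕ → Prop) (G G' : LGraph Λ) (v v' : ℕ) (k : ℕ) : Prop :=
  ∀ us : Fin k → ℕ, Function.Injective us → (∀ i, G.edge v (us i)) →
    ∃ us' : Fin k → ℕ, Function.Injective us' ∧ (∀ i, G'.edge v' (us' i)) ∧
      ∀ i, Z (us i) (us' i)

/-- `Z` is a standard graded `l`-bisimulation (the relation underlying standard 1-WL
colour refinement). -/
def IsStdBisim {Λ : Type} (G G' : LGraph Λ) : ℕ → (ℕ → ℕ → Prop) → Prop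
  | 0, Z => ∀ v v', Z v v' → G.lab v = G'.lab v'
  | l + 1, Z => ∃ Z', IsStdBisim G G' l Z' ∧
      ∀ v v', Z v v' → Z' v v' ∧ ∀ k, 1 ≤ k →
        StdForth Z' G G' v v' k ∧ StdForth (fun a b => Z' b a) G' G v' v k

/-- `(G,v)` and `(G',v')` are standard graded `l`-bisimilar. -/
def StdBisimilar {Λ : Type} (l : ℕ) (G : LGraph Λ) (v : ℕ) (G' : LGraph Λ) (v' : ℕ) : Prop :=
  ∃ Z, IsStdBisim G G' l Z ∧ Z v v'

/-- The edge template `T₁ = ({r,a}, E⁺ = {(r,a)}, E⁻ = ∅, r)`. -/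
def T1 : Template := ⟨1, {(0, 1)}, ∅, by decide⟩

/-- The triangle template `T△ = ({r,a,b}, E⁺ = {(r,a),(a,b),(b,r)}, E⁻ = ∅, r)`. -/
def Ttri : Template := ⟨2, {(0, 1), (1, 2), (2, 0)}, ∅, by decide⟩

/-- The directed 3-cycle, all nodes with the same constant label. -/
def G3 : LGraph Unit where
  verts := {0, 1, 2}
  edge u w := (u = 0 ∧ w = 1) ∨ (u = 1 ∧ w = 2) ∨ (u = 2 ∧ w = 0)
  lab _ := ()
  edge_mem := by rintro u w (⟨rfl, rfl⟩ | ⟨rfl, rfl⟩ | ⟨rfl, rfl⟩) <;> simp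

/-- The directed 6-cycle, all nodes with the same constant label. -/
def G6 : LGraph Unit where
  verts := Finset.range 6
  edge u w := u < 6 ∧ w = (u + 1) % 6
  lab _ := ()
  edge_mem := by
    rintro u w ⟨hu, rfl⟩
    simp only [Finset.mem_range]
    omega

/-! ### Auxiliary development for `gnn_to_logic` -/

namespace GNNAux

lemma sat_dia {AP : Type} (G : LGraph (AP → Bool)) (T : Template) (j : ℕ)
    (φs : Fin T.n → GML AP) (v : ℕ) :
    Sat G (GML.dia T j φs) v ↔ j ≤ Scard G T v φs := Iff.rfl

lemma sat_bigConj {AP : Type} (G : LGraph (AP → Bool)) (lst : List (GML AP)) (v : ℕ) :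
    Sat G (bigConj lst) v ↔ ∀ φ ∈ lst, Sat G φ v := by
  induction lst with
  | nil => simp [bigConj, Sat]
  | cons a t ih => simp [bigConj, Sat, ih]

lemma md_bigConj {AP : Type} (lst : List (GML AP)) (n : ℕ)
    (h : ∀ φ ∈ lst, GML.md φ ≤ n) : (bigConj lst).md ≤ n := by
  induction lst with
  | nil => simp [bigConj, GML.md]
  | cons a t ih =>
    simp only [bigConj, GML.md, max_le_iff]
    exact ⟨h a (by simp), ih fun φ hφ => h φ (by simp [hφ])⟩

lemma cb_bigConj {AP : Type} (lst : List (GML AP)) (n : ℕ)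
    (h : ∀ φ ∈ lst, GML.cb φ ≤ n) : (bigConj lst).cb ≤ n := by
  induction lst with
  | nil => simp [bigConj, GML.cb]
  | cons a t ih =>
    simp only [bigConj, GML.cb, max_le_iff]
    exact ⟨h a (by simp), ih fun φ hφ => h φ (by simp [hφ])⟩

lemma wf_bigConj {AP : Type} (𝒯 : Finset Template) (lst : List (GML AP))
    (h : ∀ φ ∈ lst, GML.Wf 𝒯 φ) : (bigConj lst).Wf 𝒯 := by
  induction lst with
  | nil => simp [bigConj, GML.Wf]
  | cons a t ih =>
    exact ⟨h a (by simp), ih fun φ hφ => h φ (by simp [hφ])⟩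

/-- Disjunction via De Morgan. -/
def orF {AP : Type} (a b : GML AP) : GML AP := .neg (.and (.neg a) (.neg b))

def bigDisj {AP : Type} (lst : List (GML AP)) : GML AP :=
  lst.foldr orF (.neg .top)

lemma sat_bigDisj {AP : Type} (G : LGraph (AP → Bool)) (lst : List (GML AP)) (v : ℕ) :
    Sat G (bigDisj lst) v ↔ ∃ φ ∈ lst, Sat G φ v := by
  induction lst with
  | nil => simp [bigDisj, Sat]
  | cons a t ih =>
    simp only [bigDisj, List.foldr, orF, Sat] at ih ⊢
    rw [show (t.foldr orF (.neg .top)) = bigDisj t from rfl] at *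
    constructor
    · intro h
      by_cases ha : Sat G a v
      · exact ⟨a, by simp, ha⟩
      · have := ih.mp (by tauto)
        obtain ⟨φ, hφ, hs⟩ := this
        exact ⟨φ, by simp [hφ], hs⟩
    · rintro ⟨φ, hφ, hs⟩
      rcases List.mem_cons.mp hφ with rfl | hφ
      · tauto
      · have := ih.mpr ⟨φ, hφ, hs⟩; tauto

lemma md_bigDisj {AP : Type} (lst : List (GML AP)) (n : ℕ)
    (h : ∀ φ ∈ lst, GML.md φ ≤ n) : (bigDisj lst).md ≤ n := by
  induction lst with
  | nil => simp [bigDisj, GML.md]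
  | cons a t ih =>
    simp only [bigDisj, List.foldr, orF, GML.md, max_le_iff]
    exact ⟨h a (by simp), ih fun φ hφ => h φ (by simp [hφ])⟩

lemma cb_bigDisj {AP : Type} (lst : List (GML AP)) (n : ℕ)
    (h : ∀ φ ∈ lst, GML.cb φ ≤ n) : (bigDisj lst).cb ≤ n := by
  induction lst with
  | nil => simp [bigDisj, GML.cb]
  | cons a t ih =>
    simp only [bigDisj, List.foldr, orF, GML.cb, max_le_iff]
    exact ⟨h a (by simp), ih fun φ hφ => h φ (by simp [hφ])⟩

lemma wf_bigDisj {AP : Type} (𝒯 : Finset Template) (lst : List (GML AP))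
    (h : ∀ φ ∈ lst, GML.Wf 𝒯 φ) : (bigDisj lst).Wf 𝒯 := by
  induction lst with
  | nil => simp [bigDisj, GML.Wf]
  | cons a t ih =>
    exact ⟨h a (by simp), ih fun φ hφ => h φ (by simp [hφ])⟩

lemma count_mcap {α : Type} (c : ℕ) (m : Multiset α) (x : α) :
    (mcap c m).count x = min c (m.count x) := by
  classical
  unfold mcap
  rw [Multiset.count_bind]
  have : ((m.toFinset.val.map fun b => ((Multiset.replicate (min c (m.count b)) b).count x)).sum)
      = ∑ b ∈ m.toFinset, if b = x then min c (m.count b) else 0 := by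
    rw [Finset.sum]
    congr 1
    apply Multiset.map_congr rfl
    intro b _
    rw [Multiset.count_replicate]
  rw [this, Finset.sum_ite_eq']
  by_cases hx : x ∈ m.toFinset
  · simp [hx]
  · simp only [hx, if_false]
    have : m.count x = 0 := by
      simpa [Multiset.count_eq_zero] using fun h => hx (Multiset.mem_toFinset.mpr h)
    simp [this]

lemma min_sum_min {ι : Type*} (c : ℕ) (s : Finset ι) (f : ι → ℕ) :
    min c (∑ i ∈ s, min c (f i)) = min c (∑ i ∈ s, f i) := by
  induction s using Finset.induction with
  | empty => simp
  | insert _ _ hx ih =>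
    rw [Finset.sum_insert hx, Finset.sum_insert hx]
    omega


/-- Formula expressing `min c (Scard G T v τψ) = k` (for `k ≤ c`, `1 ≤ c`). -/
def cntForm {AP : Type} (c : ℕ) (T : Template) (τψ : Fin T.n → GML AP) (k : ℕ) : GML AP :=
  if k = 0 then .neg (.dia T 1 τψ)
  else if k < c then .and (.dia T k τψ) (.neg (.dia T (k+1) τψ))
  else .dia T c τψ

lemma sat_cntForm {AP : Type} (c : ℕ) (hc : 1 ≤ c) (T : Template) (τψ : Fin T.n → GML AP)
    (k : ℕ) (hk : k ≤ c) (G : LGraph (AP → Bool)) (v : ℕ) :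
    Sat G (cntForm c T τψ k) v ↔ min c (Scard G T v τψ) = k := by
  unfold cntForm
  split_ifs with h1 h2
  · show ¬ (1 ≤ Scard G T v τψ) ↔ _
    omega
  · show (k ≤ Scard G T v τψ) ∧ ¬ (k + 1 ≤ Scard G T v τψ) ↔ _
    omega
  · show c ≤ Scard G T v τψ ↔ _
    omega

lemma md_cntForm {AP : Type} (c : ℕ) (T : Template) (τψ : Fin T.n → GML AP) (k n : ℕ)
    (h : ∀ i, (τψ i).md ≤ n) : (cntForm c T τψ k).md ≤ 1 + n := by
  have hsup : (Finset.univ.sup fun i => (τψ i).md) ≤ n := Finset.sup_le fun i _ => h i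
  unfold cntForm
  split_ifs <;> simp only [GML.md, max_le_iff] <;> omega

lemma cb_cntForm {AP : Type} (c : ℕ) (hc : 1 ≤ c) (T : Template) (τψ : Fin T.n → GML AP)
    (k : ℕ) (hk : k ≤ c) (h : ∀ i, (τψ i).cb ≤ c) : (cntForm c T τψ k).cb ≤ c := by
  have hsup : (Finset.univ.sup fun i => (τψ i).cb) ≤ c := Finset.sup_le fun i _ => h i
  unfold cntForm
  split_ifs <;> simp only [GML.cb, max_le_iff] <;> omega

lemma wf_cntForm {AP : Type} (𝒯 : Finset Template) (c : ℕ) (hc : 1 ≤ c) (T : Template)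
    (hT : T ∈ 𝒯) (τψ : Fin T.n → GML AP) (k : ℕ) (h : ∀ i, (τψ i).Wf 𝒯) :
    (cntForm c T τψ k).Wf 𝒯 := by
  unfold cntForm
  split_ifs with h1 h2
  · exact ⟨hT, le_refl 1, h⟩
  · exact ⟨⟨hT, by omega, h⟩, ⟨hT, by omega, h⟩⟩
  · exact ⟨hT, hc, h⟩

variable {d nAr L : ℕ} (𝒯 : Finset Template) (N : TGNN 𝒯 d nAr L) (c : ℕ)

/-- Bundle of data for the logical characterization of layer-`l` features. -/
structure Stage (l : ℕ) where
  S : Type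
  fin : Fintype S
  ψ : S → GML (Fin d)
  tm : LGraph (Fin d → Bool) → ℕ → S
  val : S → (Fin d → ℝ)
  hSat : ∀ G v t, Sat G (ψ t) v ↔ t = tm G v
  hmd : ∀ t, (ψ t).md ≤ l
  hcb : ∀ t, (ψ t).cb ≤ c
  hwf : ∀ t, (ψ t).Wf 𝒯
  hval : ∀ (G : LGraph (Fin d → Bool)) (v : ℕ), N.feat G.toReal l v = val (tm G v)

/-- Layer 0. -/
noncomputable def stage0 : Stage 𝒯 N c 0 where
  S := Fin d → Bool
  fin := inferInstance
  ψ s := bigConj ((Finset.univ : Finset (Fin d)).toList.map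
    (fun p => if s p then GML.prop p else GML.neg (GML.prop p)))
  tm G v := G.lab v
  val s := fun i => boolToReal (s i)
  hSat := by
    intro G v s
    rw [sat_bigConj]
    simp only [List.mem_map, Finset.mem_toList, Finset.mem_univ, true_and]
    constructor
    · intro h
      funext p
      have := h _ ⟨p, rfl⟩
      by_cases hs : s p <;> simp [hs, Sat] at this <;> simp [hs, this]
    · rintro rfl φ ⟨p, rfl⟩
      by_cases hs : G.lab v p <;> simp [hs, Sat]
  hmd := by
    intro s
    apply md_bigConj
    rintro φ hφ
    simp only [List.mem_map] at hφ
    obtain ⟨p, _, rfl⟩ := hφ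
    by_cases hs : s p <;> simp [hs, GML.md]
  hcb := by
    intro s
    apply cb_bigConj
    rintro φ hφ
    simp only [List.mem_map] at hφ
    obtain ⟨p, _, rfl⟩ := hφ
    by_cases hs : s p <;> simp [hs, GML.cb]
  hwf := by
    intro s
    apply wf_bigConj
    rintro φ hφ
    simp only [List.mem_map] at hφ
    obtain ⟨p, _, rfl⟩ := hφ
    by_cases hs : s p <;> simp [hs, GML.Wf]
  hval := by
    intro G v
    rfl


lemma count_map_sum {α β : Type} [Fintype α] (m : Multiset α) (F : α → β) (x : β) :
    (m.map F).count x = ∑ a : α, if F a = x then m.count a else 0 := by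
  classical
  induction m using Multiset.induction with
  | empty => simp
  | cons a s ih =>
    rw [Multiset.map_cons, Multiset.count_cons, ih]
    have : ∀ b : α, (if F b = x then (a ::ₘ s).count b else 0)
        = (if F b = x then s.count b else 0) + (if b = a then (if F b = x then 1 else 0) else 0) := by
      intro b
      rw [Multiset.count_cons]
      by_cases h2 : b = a
      · subst h2; by_cases h1 : F b = x <;> simp [h1]
      · simp [h2]
    rw [Finset.sum_congr rfl (fun b _ => this b), Finset.sum_add_distrib,
      Finset.sum_ite_eq' Finset.univ a (fun b => if F b = x then 1 else 0)]
    simp [eq_comm]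

lemma count_bind_replicate {α β : Type} [Fintype α] (g : α → ℕ) (F : α → β) (x : β) :
    ((Finset.univ.val.bind fun a => Multiset.replicate (g a) (F a)).count x)
      = ∑ a : α, if F a = x then g a else 0 := by
  classical
  rw [Multiset.count_bind]
  show ∑ a : α, (Multiset.replicate (g a) (F a)).count x = _
  refine Finset.sum_congr rfl fun a _ => ?_
  rw [Multiset.count_replicate]

/-- A `c`-bounded multiset function applied to `m.map F` only depends on the
`c`-capped counts of `m`. -/
lemma cbounded_map_eq {α β γ : Type} [Fintype α] (c : ℕ) (m : Multiset α) (F : α → β)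
    (g : α → ℕ) (hg : ∀ a, g a = min c (m.count a))
    (A : Multiset β → γ) (hA : CBoundedFun c A) :
    A (m.map F) = A (Finset.univ.val.bind fun a => Multiset.replicate (g a) (F a)) := by
  classical
  rw [hA (m.map F), hA (Finset.univ.val.bind fun a => Multiset.replicate (g a) (F a))]
  apply congrArg
  ext x
  rw [count_mcap, count_mcap, count_map_sum, count_bind_replicate]
  have h1 : ∑ a : α, (if F a = x then g a else 0)
      = ∑ a : α, min c (if F a = x then m.count a else 0) := by
    refine Finset.sum_congr rfl fun a _ => ?_
    rw [hg]
    by_cases h : F a = x <;> simp [h]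
  have h2 : min c (∑ a : α, min c (if F a = x then m.count a else 0))
      = min c (∑ a : α, if F a = x then m.count a else 0) :=
    min_sum_min c Finset.univ (fun a => if F a = x then m.count a else 0)
  omega

variable {𝒯} {N} {c}

/-- Successor stage. -/
noncomputable def stageSucc (hc : 1 ≤ c) (hN : N.IsCBounded c) {l : ℕ}
    (st : Stage 𝒯 N c l) : Stage 𝒯 N c (l + 1) :=
  letI := st.fin
  { S := st.S × (∀ T : {x // x ∈ 𝒯}, (Fin T.1.n → st.S) → Fin (c + 1))
    fin := inferInstance
    ψ := fun t => .and (st.ψ t.1) (bigConj (𝒯.attach.toList.map (fun T =>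
      bigConj ((Finset.univ : Finset (Fin T.1.n → st.S)).toList.map (fun τ' =>
        cntForm c T.1 (fun i => st.ψ (τ' i)) (t.2 T τ'))))))
    tm := fun G v => (st.tm G v, fun T τ' =>
      (⟨min c (Scard G T.1 v (fun i => st.ψ (τ' i))), by omega⟩ : Fin (c + 1)))
    val := fun t =>
      if h : l < L then
        N.comb ⟨l, h⟩ (st.val t.1) (fun j =>
          N.agg ⟨l, h⟩ j
            ((Finset.univ : Finset (Fin (N.temp ⟨l, h⟩ j).n → st.S)).val.bind
              (fun τ' => Multiset.replicate
                ((t.2 ⟨N.temp ⟨l, h⟩ j, N.temp_mem ⟨l, h⟩ j⟩ τ' : Fin (c+1)) : ℕ)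
                (N.aggT ⟨l, h⟩ j (fun u => st.val (Fin.cases t.1 τ' u))))))
      else fun _ => 0
    hSat := by
      intro G v t
      obtain ⟨s, g⟩ := t
      show Sat G (st.ψ s) v ∧ Sat G (bigConj _) v ↔ _
      rw [st.hSat, sat_bigConj, Prod.mk.injEq]
      constructor
      · rintro ⟨hs, h2⟩
        refine ⟨hs, ?_⟩
        funext T τ'
        have hT := h2 _ (List.mem_map.mpr ⟨T, Finset.mem_toList.mpr (Finset.mem_attach _ _), rfl⟩)
        rw [sat_bigConj] at hT
        have hτ := hT _ (List.mem_map.mpr ⟨τ', Finset.mem_toList.mpr (Finset.mem_univ _), rfl⟩)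
        rw [sat_cntForm c hc _ _ _ (Fin.is_le _)] at hτ
        exact Fin.ext hτ.symm
      · rintro ⟨hs, hg⟩
        refine ⟨hs, ?_⟩
        intro φ hφ
        simp only [List.mem_map, Finset.mem_toList, Finset.mem_attach, true_and] at hφ
        obtain ⟨T, rfl⟩ := hφ
        rw [sat_bigConj]
        intro φ hφ
        simp only [List.mem_map, Finset.mem_toList, Finset.mem_univ, true_and] at hφ
        obtain ⟨τ', rfl⟩ := hφ
        rw [sat_cntForm c hc _ _ _ (Fin.is_le _)]
        subst hg
        rfl
    hmd := by
      rintro ⟨s, g⟩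
      show max _ _ ≤ l + 1
      refine max_le (le_trans (st.hmd s) (by omega)) ?_
      apply md_bigConj
      rintro φ hφ
      simp only [List.mem_map] at hφ
      obtain ⟨T, _, rfl⟩ := hφ
      apply md_bigConj
      rintro φ hφ
      simp only [List.mem_map] at hφ
      obtain ⟨τ', _, rfl⟩ := hφ
      have := md_cntForm c T.1 (fun i => st.ψ (τ' i)) (g T τ') l (fun i => st.hmd (τ' i))
      omega
    hcb := by
      rintro ⟨s, g⟩
      show max _ _ ≤ c
      refine max_le (st.hcb s) ?_
      apply cb_bigConj
      rintro φ hφ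
      simp only [List.mem_map] at hφ
      obtain ⟨T, _, rfl⟩ := hφ
      apply cb_bigConj
      rintro φ hφ
      simp only [List.mem_map] at hφ
      obtain ⟨τ', _, rfl⟩ := hφ
      exact cb_cntForm c hc T.1 (fun i => st.ψ (τ' i)) (g T τ') (Fin.is_le _)
        (fun i => st.hcb (τ' i))
    hwf := by
      rintro ⟨s, g⟩
      refine ⟨st.hwf s, ?_⟩
      apply wf_bigConj
      rintro φ hφ
      simp only [List.mem_map] at hφ
      obtain ⟨T, _, rfl⟩ := hφ
      apply wf_bigConj
      rintro φ hφ
      simp only [List.mem_map] at hφ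
      obtain ⟨τ', _, rfl⟩ := hφ
      exact wf_cntForm 𝒯 c hc T.1 T.2 (fun i => st.ψ (τ' i)) (g T τ')
        (fun i => st.hwf (τ' i))
    hval := by
      intro G v
      show N.feat G.toReal (l + 1) v = _
      rw [TGNN.feat]
      by_cases h : l < L
      · rw [dif_pos h]
        show _ = (if h : l < L then _ else _)
        rw [dif_pos h]
        dsimp only
        rw [st.hval G v]
        apply congrArg
        funext j
        have hemb : embFinset (N.temp ⟨l, h⟩ j) G.toReal v
            = embFinset (N.temp ⟨l, h⟩ j) G v := rfl
        have hM : (embFinset (N.temp ⟨l, h⟩ j) G.toReal v).val.map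
              (fun f => N.aggT ⟨l, h⟩ j fun u => N.feat G.toReal l (f u))
            = ((embFinset (N.temp ⟨l, h⟩ j) G v).val.map
                (fun f (i : Fin (N.temp ⟨l, h⟩ j).n) => st.tm G (f i.succ))).map
                (fun τ' => N.aggT ⟨l, h⟩ j fun u => st.val (Fin.cases (st.tm G v) τ' u)) := by
          rw [hemb, Multiset.map_map]
          apply Multiset.map_congr rfl
          intro f hf
          have hfE : IsEmb (N.temp ⟨l, h⟩ j) G v f :=
            (Finset.mem_filter.mp hf).2
          obtain ⟨hinj, hf0, _, _, _⟩ := hfE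
          show N.aggT _ _ _ = N.aggT _ _ _
          apply congrArg
          funext u
          induction u using Fin.cases with
          | zero => rw [st.hval, hf0]; simp
          | succ i => rw [st.hval]; simp
        rw [hM]
        refine cbounded_map_eq c _ _ _ ?_ _ (hN ⟨l, h⟩ j)
        intro τ'
        show min c (Scard G (N.temp ⟨l, h⟩ j) v (fun i => st.ψ (τ' i))) = _
        congr 1
        show Scard G (N.temp ⟨l, h⟩ j) v (fun i => st.ψ (τ' i)) = _
        rw [Multiset.count_map]
        show (Finset.filter _ _).card = _
        show Multiset.card (Multiset.filter _ (embFinset (N.temp ⟨l, h⟩ j) G v).val) = _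
        congr 1
        refine @Multiset.filter_congr _ _ _ ?_ ?_ _ ?_
        intro f hf
        constructor
        · intro hall
          funext i
          exact (st.hSat G (f i.succ) (τ' i)).mp (hall i)
        · intro heq i
          rw [st.hSat]
          exact congrFun heq i
      · rw [dif_neg h]
        show _ = (if h : l < L then _ else _)
        rw [dif_neg h] }

/-- All stages. -/
noncomputable def stages (hc : 1 ≤ c) (hN : N.IsCBounded c) : ∀ l : ℕ, Stage 𝒯 N c l
  | 0 => stage0 𝒯 N c
  | l + 1 => stageSucc hc hN (stages hc hN l)

end GNNAux

/-- For every `c`-bounded `𝒯`-GNN `𝒩` with `L` layers there is a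
`GML(𝒯)` formula `φ` of modal depth (at most) `L` and counting bound (at most) `c` that
captures `𝒩`: for every finite `{0,1}^d`-labelled graph `G` and node `v` of `G`,
`𝒩(G,v) = 1` iff `(G,v) ⊨ φ`. -/
theorem gnn_to_logic {d nAr L : ℕ} (𝒯 : Finset Template) (N : TGNN 𝒯 d nAr L)
    (c : ℕ) (hc : 1 ≤ c) (hN : N.IsCBounded c) :
    ∃ φ : GML (Fin d), φ.Wf 𝒯 ∧ φ.md ≤ L ∧ φ.cb ≤ c ∧
      ∀ (G : LGraph (Fin d → Bool)) (v : ℕ), v ∈ G.verts →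
        (N.cls (N.feat G.toReal L v) = true ↔ Sat G φ v) := by
  classical
  let st := GNNAux.stages hc hN L
  letI := st.fin
  refine ⟨GNNAux.bigDisj ((((Finset.univ : Finset st.S).filter
      (fun t => N.cls (st.val t) = true)).toList).map st.ψ), ?_, ?_, ?_, ?_⟩
  · apply GNNAux.wf_bigDisj
    rintro φ hφ
    simp only [List.mem_map] at hφ
    obtain ⟨t, _, rfl⟩ := hφ
    exact st.hwf t
  · apply GNNAux.md_bigDisj
    rintro φ hφ
    simp only [List.mem_map] at hφ
    obtain ⟨t, _, rfl⟩ := hφ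
    exact st.hmd t
  · apply GNNAux.cb_bigDisj
    rintro φ hφ
    simp only [List.mem_map] at hφ
    obtain ⟨t, _, rfl⟩ := hφ
    exact st.hcb t
  · intro G v _
    rw [GNNAux.sat_bigDisj]
    constructor
    · intro hcls
      refine ⟨st.ψ (st.tm G v), List.mem_map.mpr ⟨st.tm G v,
        Finset.mem_toList.mpr (Finset.mem_filter.mpr ⟨Finset.mem_univ _, ?_⟩), rfl⟩,
        (st.hSat G v _).mpr rfl⟩
      rw [← st.hval G v]
      exact hcls
    · rintro ⟨φ, hφ, hsat⟩
      simp only [List.mem_map, Finset.mem_toList, Finset.mem_filter, Finset.mem_univ,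
        true_and] at hφ
      obtain ⟨t, ht, rfl⟩ := hφ
      have hteq := (st.hSat G v t).mp hsat
      rw [st.hval G v, ← hteq]
      exact ht
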